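/- Fix d ≥ 2, unit vectors x̂_1,…,x̂_n ∈ S^{d−1}, and weights ω_i > 0 with ∑_i ω_i = 1, and let Ad(y) = ∑_i ω_i ‖x̂_i − y‖. Suppose ‖∑_i ω_i x̂_i‖ < 5/1000 and the smallest eigenvalue of the Hessian H Ad(0) = I_d − ∑_i ω_i x̂_i x̂_i^T is greater than (d−1)/d − 1/100. Then the geometric median μ of the weighted point cloud (the unique minimizer of Ad) satisfies ‖μ‖ ≤ 1/50. -/

import Mathlib

set_option maxHeartbeats 1000000

private lemma key1 (r c s : ℝ) (hcr : |c| ≤ r) (hs0 : 0 ≤ s)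
    (hsle : s ≤ 1 + r) (hs2 : s ^ 2 = 1 - 2 * c + r ^ 2) :
    2 * (1 + r) * (1 - c) + (r ^ 2 - c ^ 2) ≤ 2 * (1 + r) * s := by
  obtain ⟨hc1, hc2⟩ := abs_le.mp hcr
  have hb : 0 ≤ r ^ 2 - c ^ 2 := by nlinarith
  have hsa : 1 - c ≤ s := by nlinarith [sq_nonneg (s - (1 - c)), sq_nonneg (s + (1 - c))]
  have h2 : s + (1 - c) ≤ 2 * (1 + r) := by linarith
  nlinarith [mul_le_mul_of_nonneg_left h2 (show (0:ℝ) ≤ s - (1 - c) by linarith)]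

private lemma key2 (r c s h : ℝ) (hr : 0 ≤ r) (hr48 : r ≤ 1 / 48) (hcr : |c| ≤ r)
    (hs0 : 0 ≤ s) (hsle : s ≤ 1 + r) (hs2 : s ^ 2 = 1 - 2 * c + r ^ 2)
    (hh0 : 0 ≤ h) (hh2 : h ^ 2 = 1 - c + r ^ 2 / 4) :
    4 * (1 + r) * (2 + r) * h ≤ 4 * (1 + r) * (2 + r) * ((1 + s) / 2) - (r ^ 2 - c ^ 2) := by
  obtain ⟨hc1, hc2⟩ := abs_le.mp hcr
  have hb : 0 ≤ r ^ 2 - c ^ 2 := by nlinarith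
  have hsa : 1 - c ≤ s := by nlinarith [sq_nonneg (s - (1 - c)), sq_nonneg (s + (1 - c))]
  have h2 : s + (1 - c) ≤ 2 * (1 + r) := by linarith
  have he : r ^ 2 - c ^ 2 ≤ 2 * (1 + r) * (s - (1 - c)) := by
    nlinarith [mul_le_mul_of_nonneg_left h2 (show (0:ℝ) ≤ s - (1 - c) by linarith)]
  have hh2' : h ^ 2 = ((1 + s) / 2) ^ 2 - (s - (1 - c)) / 2 := by linear_combination hh2 - hs2 / 4
  have hRpos : 0 ≤ 4 * (1 + r) * (2 + r) * ((1 + s) / 2) - (r ^ 2 - c ^ 2) := by nlinarith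
  have hsq : (4 * (1 + r) * (2 + r) * h) ^ 2
      ≤ (4 * (1 + r) * (2 + r) * ((1 + s) / 2) - (r ^ 2 - c ^ 2)) ^ 2 := by
    have hM0 : (0:ℝ) ≤ 4 * (1 + r) * (2 + r) := by positivity
    have h6 : 4 * (1 + r) * (2 + r) * (r ^ 2 - c ^ 2) * (2 + r)
        ≤ 4 * (1 + r) * (2 + r) * (2 * (1 + r) * (s - (1 - c))) * (2 + r) :=
      mul_le_mul_of_nonneg_right (mul_le_mul_of_nonneg_left he hM0) (by linarith)
    have h7 : 0 ≤ 4 * (1 + r) * (2 + r) * (r ^ 2 - c ^ 2) * (1 + r - s) :=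
      mul_nonneg (mul_nonneg hM0 hb) (by linarith)
    nlinarith [hh2', h6, h7, sq_nonneg (r ^ 2 - c ^ 2)]
  exact le_of_pow_le_pow_left₀ (by norm_num) hRpos hsq

/-- If `‖∑ ω_i x̂_i‖ = ‖∇Ad(0)‖ < 5/1000` and the smallest eigenvalue of the Hessian
`H Ad(0) = I_d - ∑ ω_i x̂_i x̂_iᵀ` exceeds `(d-1)/d - 1/100` (expressed via the Rayleigh
quotient: every unit vector `v` has `1 - ∑ ω_i ⟨x̂_i, v⟩² > (d-1)/d - 1/100`), with `d ≥ 2`,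
then any geometric median `μ` (minimizer of `Ad(y) = ∑ ω_i ‖x̂_i - y‖`) satisfies
`‖μ‖ ≤ 1/50`. -/
theorem stmt14 (d n : ℕ) (hd : 2 ≤ d)
    (x : Fin n → EuclideanSpace ℝ (Fin d)) (hx : ∀ i, ‖x i‖ = 1)
    (ω : Fin n → ℝ) (hω : ∀ i, 0 < ω i) (hsum : ∑ i, ω i = 1)
    (hgrad : ‖∑ i, ω i • x i‖ < 5 / 1000)
    (hhess : ∀ v : EuclideanSpace ℝ (Fin d), ‖v‖ = 1 →
      ((d : ℝ) - 1) / d - 1 / 100 < 1 - ∑ i, ω i * (inner ℝ (x i) v : ℝ) ^ 2)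
    (μ : EuclideanSpace ℝ (Fin d))
    (hmed : IsMinOn (fun y : EuclideanSpace ℝ (Fin d) => ∑ i, ω i * ‖x i - y‖) Set.univ μ) :
    ‖μ‖ ≤ 1 / 50 := by
  by_contra hr50
  push_neg at hr50
  have hr0 : (0:ℝ) < ‖μ‖ := lt_trans (by norm_num) hr50
  have hcr : ∀ i, |(inner ℝ (x i) μ : ℝ)| ≤ ‖μ‖ := fun i => by
    simpa [hx i] using abs_real_inner_le_norm (x i) μ
  have hs2 : ∀ i, ‖x i - μ‖ ^ 2 = 1 - 2 * (inner ℝ (x i) μ : ℝ) + ‖μ‖ ^ 2 := fun i => by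
    rw [@norm_sub_sq_real, hx i]; ring
  have hh2 : ∀ i, ‖x i - (2⁻¹:ℝ) • μ‖ ^ 2 = 1 - (inner ℝ (x i) μ : ℝ) + ‖μ‖ ^ 2 / 4 := fun i => by
    rw [@norm_sub_sq_real, hx i, real_inner_smul_right, norm_smul, Real.norm_eq_abs,
      abs_of_nonneg (by norm_num : (0:ℝ) ≤ 2⁻¹)]
    ring
  have hsle : ∀ i, ‖x i - μ‖ ≤ 1 + ‖μ‖ := fun i => by
    calc ‖x i - μ‖ ≤ ‖x i‖ + ‖μ‖ := norm_sub_le _ _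
    _ = 1 + ‖μ‖ := by rw [hx i]
  -- minimality at 0
  have hF1le1 : ∑ i, ω i * ‖x i - μ‖ ≤ 1 := by
    have h0 := isMinOn_iff.mp hmed 0 (Set.mem_univ _)
    simp only [sub_zero] at h0
    calc ∑ i, ω i * ‖x i - μ‖ ≤ ∑ i, ω i * ‖x i‖ := h0
      _ = ∑ i, ω i := Finset.sum_congr rfl fun i _ => by rw [hx i, mul_one]
      _ = 1 := hsum
  -- minimality at μ/2
  have hFh : ∑ i, ω i * ‖x i - μ‖ ≤ ∑ i, ω i * ‖x i - (2⁻¹:ℝ) • μ‖ :=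
    isMinOn_iff.mp hmed ((2⁻¹:ℝ) • μ) (Set.mem_univ _)
  -- gradient bound
  have hC : (∑ i, ω i * (inner ℝ (x i) μ : ℝ)) ≤ (5/1000) * ‖μ‖ := by
    have hCm : (∑ i, ω i * (inner ℝ (x i) μ : ℝ)) = (inner ℝ (∑ i, ω i • x i) μ : ℝ) := by
      rw [sum_inner]
      exact Finset.sum_congr rfl fun i _ => (real_inner_smul_left _ _ _).symm
    rw [hCm]
    calc (inner ℝ (∑ i, ω i • x i) μ : ℝ) ≤ ‖∑ i, ω i • x i‖ * ‖μ‖ := real_inner_le_norm _ _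
      _ ≤ (5/1000) * ‖μ‖ := mul_le_mul_of_nonneg_right hgrad.le (norm_nonneg μ)
  -- Hessian / Rayleigh bound
  have hQ : (∑ i, ω i * (inner ℝ (x i) μ : ℝ) ^ 2) ≤ (51/100) * ‖μ‖ ^ 2 := by
    have hv : ‖(‖μ‖⁻¹ • μ : EuclideanSpace ℝ (Fin d))‖ = 1 := by
      rw [norm_smul, Real.norm_eq_abs, abs_inv, abs_norm, inv_mul_cancel₀ hr0.ne']
    have hQv := hhess _ hv
    have hd2 : (2:ℝ) ≤ (d:ℝ) := by exact_mod_cast hd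
    have hdpos : (0:ℝ) < (d:ℝ) := by linarith
    have hhalf : (1:ℝ)/2 ≤ ((d:ℝ) - 1) / d := by
      rw [le_div_iff₀ hdpos]; linarith
    have he : (∑ i, ω i * (inner ℝ (x i) (‖μ‖⁻¹ • μ) : ℝ) ^ 2)
        = (‖μ‖⁻¹) ^ 2 * ∑ i, ω i * (inner ℝ (x i) μ : ℝ) ^ 2 := by
      rw [Finset.mul_sum]
      exact Finset.sum_congr rfl fun i _ => by rw [real_inner_smul_right]; ring
    rw [he] at hQv
    have h51 : (‖μ‖⁻¹) ^ 2 * (∑ i, ω i * (inner ℝ (x i) μ : ℝ) ^ 2) < 51/100 := by linarith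
    have hrr : (0:ℝ) < ‖μ‖ ^ 2 := by positivity
    calc (∑ i, ω i * (inner ℝ (x i) μ : ℝ) ^ 2)
        = ‖μ‖ ^ 2 * ((‖μ‖⁻¹) ^ 2 * (∑ i, ω i * (inner ℝ (x i) μ : ℝ) ^ 2)) := by
          field_simp
      _ ≤ ‖μ‖ ^ 2 * (51/100) := (mul_lt_mul_of_pos_left h51 hrr).le
      _ = (51/100) * ‖μ‖ ^ 2 := by ring
  -- summed key1
  have hA : 2 * (1 + ‖μ‖) * (1 - ∑ i, ω i * (inner ℝ (x i) μ : ℝ))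
      + (‖μ‖ ^ 2 - ∑ i, ω i * (inner ℝ (x i) μ : ℝ) ^ 2)
      ≤ 2 * (1 + ‖μ‖) * ∑ i, ω i * ‖x i - μ‖ := by
    have hs := Finset.sum_le_sum (fun i (_ : i ∈ Finset.univ) =>
      mul_le_mul_of_nonneg_left
        (key1 ‖μ‖ (inner ℝ (x i) μ : ℝ) ‖x i - μ‖ (hcr i) (norm_nonneg _) (hsle i) (hs2 i))
        (hω i).le)
    have eL : (∑ i, ω i * (2 * (1 + ‖μ‖) * (1 - (inner ℝ (x i) μ : ℝ))
          + (‖μ‖ ^ 2 - (inner ℝ (x i) μ : ℝ) ^ 2)))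
        = 2 * (1 + ‖μ‖) * (1 - ∑ i, ω i * (inner ℝ (x i) μ : ℝ))
          + (‖μ‖ ^ 2 - ∑ i, ω i * (inner ℝ (x i) μ : ℝ) ^ 2) := by
      calc (∑ i, ω i * (2 * (1 + ‖μ‖) * (1 - (inner ℝ (x i) μ : ℝ))
            + (‖μ‖ ^ 2 - (inner ℝ (x i) μ : ℝ) ^ 2)))
          = ∑ i, ((2 * (1 + ‖μ‖) + ‖μ‖ ^ 2) * ω i
              - 2 * (1 + ‖μ‖) * (ω i * (inner ℝ (x i) μ : ℝ))
              - ω i * (inner ℝ (x i) μ : ℝ) ^ 2) :=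
            Finset.sum_congr rfl fun i _ => by ring
        _ = (2 * (1 + ‖μ‖) + ‖μ‖ ^ 2) * (∑ i, ω i)
              - 2 * (1 + ‖μ‖) * (∑ i, ω i * (inner ℝ (x i) μ : ℝ))
              - ∑ i, ω i * (inner ℝ (x i) μ : ℝ) ^ 2 := by
            rw [Finset.sum_sub_distrib, Finset.sum_sub_distrib, ← Finset.mul_sum, ← Finset.mul_sum]
        _ = _ := by rw [hsum]; ring
    have eR : (∑ i, ω i * (2 * (1 + ‖μ‖) * ‖x i - μ‖))
        = 2 * (1 + ‖μ‖) * ∑ i, ω i * ‖x i - μ‖ := by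
      rw [Finset.mul_sum]
      exact Finset.sum_congr rfl fun i _ => by ring
    rw [eL, eR] at hs
    exact hs
  -- bootstrap: r ≤ 1/48
  have hr48 : ‖μ‖ ≤ 1/48 := by
    have p1 : 2 * (1 + ‖μ‖) * (∑ i, ω i * ‖x i - μ‖) ≤ 2 * (1 + ‖μ‖) * 1 :=
      mul_le_mul_of_nonneg_left hF1le1 (by positivity)
    have p2 : 2 * (1 + ‖μ‖) * (∑ i, ω i * (inner ℝ (x i) μ : ℝ))
        ≤ 2 * (1 + ‖μ‖) * ((5/1000) * ‖μ‖) :=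
      mul_le_mul_of_nonneg_left hC (by positivity)
    nlinarith [hA, p1, p2, hQ, hr0, hr50]
  -- summed key2
  have hB : 4 * (1 + ‖μ‖) * (2 + ‖μ‖) * (∑ i, ω i * ‖x i - (2⁻¹:ℝ) • μ‖)
      ≤ 4 * (1 + ‖μ‖) * (2 + ‖μ‖) * ((1 + ∑ i, ω i * ‖x i - μ‖) / 2)
        - (‖μ‖ ^ 2 - ∑ i, ω i * (inner ℝ (x i) μ : ℝ) ^ 2) := by
    have hs := Finset.sum_le_sum (fun i (_ : i ∈ Finset.univ) =>
      mul_le_mul_of_nonneg_left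
        (key2 ‖μ‖ (inner ℝ (x i) μ : ℝ) ‖x i - μ‖ ‖x i - (2⁻¹:ℝ) • μ‖ (norm_nonneg μ) hr48
          (hcr i) (norm_nonneg _) (hsle i) (hs2 i) (norm_nonneg _) (hh2 i))
        (hω i).le)
    have eL : (∑ i, ω i * (4 * (1 + ‖μ‖) * (2 + ‖μ‖) * ‖x i - (2⁻¹:ℝ) • μ‖))
        = 4 * (1 + ‖μ‖) * (2 + ‖μ‖) * ∑ i, ω i * ‖x i - (2⁻¹:ℝ) • μ‖ := by
      rw [Finset.mul_sum]
      exact Finset.sum_congr rfl fun i _ => by ring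
    have eR : (∑ i, ω i * (4 * (1 + ‖μ‖) * (2 + ‖μ‖) * ((1 + ‖x i - μ‖) / 2)
          - (‖μ‖ ^ 2 - (inner ℝ (x i) μ : ℝ) ^ 2)))
        = 4 * (1 + ‖μ‖) * (2 + ‖μ‖) * ((1 + ∑ i, ω i * ‖x i - μ‖) / 2)
          - (‖μ‖ ^ 2 - ∑ i, ω i * (inner ℝ (x i) μ : ℝ) ^ 2) := by
      calc (∑ i, ω i * (4 * (1 + ‖μ‖) * (2 + ‖μ‖) * ((1 + ‖x i - μ‖) / 2)
            - (‖μ‖ ^ 2 - (inner ℝ (x i) μ : ℝ) ^ 2)))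
          = ∑ i, ((4 * (1 + ‖μ‖) * (2 + ‖μ‖) / 2 - ‖μ‖ ^ 2) * ω i
              + (4 * (1 + ‖μ‖) * (2 + ‖μ‖) / 2) * (ω i * ‖x i - μ‖)
              + ω i * (inner ℝ (x i) μ : ℝ) ^ 2) :=
            Finset.sum_congr rfl fun i _ => by ring
        _ = (4 * (1 + ‖μ‖) * (2 + ‖μ‖) / 2 - ‖μ‖ ^ 2) * (∑ i, ω i)
              + (4 * (1 + ‖μ‖) * (2 + ‖μ‖) / 2) * (∑ i, ω i * ‖x i - μ‖)
              + ∑ i, ω i * (inner ℝ (x i) μ : ℝ) ^ 2 := by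
            rw [Finset.sum_add_distrib, Finset.sum_add_distrib, ← Finset.mul_sum, ← Finset.mul_sum]
        _ = _ := by rw [hsum]; ring
    rw [eL, eR] at hs
    exact hs
  -- combine
  have hlin1 : 2 * (1 + ‖μ‖) * (1 - ∑ i, ω i * ‖x i - μ‖)
      ≤ 2 * (1 + ‖μ‖) * (∑ i, ω i * (inner ℝ (x i) μ : ℝ))
        - (‖μ‖ ^ 2 - ∑ i, ω i * (inner ℝ (x i) μ : ℝ) ^ 2) := by nlinarith [hA]
  have hlin2 : 2 * (‖μ‖ ^ 2 - ∑ i, ω i * (inner ℝ (x i) μ : ℝ) ^ 2)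
      ≤ 4 * (1 + ‖μ‖) * (2 + ‖μ‖) * (1 - ∑ i, ω i * ‖x i - μ‖) := by
    have q1 : 4 * (1 + ‖μ‖) * (2 + ‖μ‖) * (∑ i, ω i * ‖x i - μ‖)
        ≤ 4 * (1 + ‖μ‖) * (2 + ‖μ‖) * (∑ i, ω i * ‖x i - (2⁻¹:ℝ) • μ‖) :=
      mul_le_mul_of_nonneg_left hFh (by positivity)
    nlinarith [q1, hB]
  have e1 : (4 * (1 + ‖μ‖) * (2 + ‖μ‖)) * (2 * (1 + ‖μ‖) * (1 - ∑ i, ω i * ‖x i - μ‖))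
      ≤ (4 * (1 + ‖μ‖) * (2 + ‖μ‖)) * (2 * (1 + ‖μ‖) * (∑ i, ω i * (inner ℝ (x i) μ : ℝ))
        - (‖μ‖ ^ 2 - ∑ i, ω i * (inner ℝ (x i) μ : ℝ) ^ 2)) :=
    mul_le_mul_of_nonneg_left hlin1 (by positivity)
  have e2 : (2 * (1 + ‖μ‖)) * (2 * (‖μ‖ ^ 2 - ∑ i, ω i * (inner ℝ (x i) μ : ℝ) ^ 2))
      ≤ (2 * (1 + ‖μ‖)) * (4 * (1 + ‖μ‖) * (2 + ‖μ‖) * (1 - ∑ i, ω i * ‖x i - μ‖)) :=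
    mul_le_mul_of_nonneg_left hlin2 (by positivity)
  have f2 : (4 * (1 + ‖μ‖) * (2 + ‖μ‖)) * (2 * (1 + ‖μ‖) * (∑ i, ω i * (inner ℝ (x i) μ : ℝ)))
      ≤ (4 * (1 + ‖μ‖) * (2 + ‖μ‖)) * (2 * (1 + ‖μ‖) * ((5/1000) * ‖μ‖)) :=
    mul_le_mul_of_nonneg_left (mul_le_mul_of_nonneg_left hC (by positivity)) (by positivity)
  have hB49 : (49/100) * ‖μ‖ ^ 2 ≤ ‖μ‖ ^ 2 - ∑ i, ω i * (inner ℝ (x i) μ : ℝ) ^ 2 := by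
    linarith [hQ]
  have f3 : (4 * (1 + ‖μ‖) + 4 * (1 + ‖μ‖) * (2 + ‖μ‖)) * ((49/100) * ‖μ‖ ^ 2)
      ≤ (4 * (1 + ‖μ‖) + 4 * (1 + ‖μ‖) * (2 + ‖μ‖))
        * (‖μ‖ ^ 2 - ∑ i, ω i * (inner ℝ (x i) μ : ℝ) ^ 2) :=
    mul_le_mul_of_nonneg_left hB49 (by positivity)
  have hbracket : (0:ℝ) < ‖μ‖ * (1 + ‖μ‖) * (144 * ‖μ‖ + 48 * ‖μ‖ ^ 2 - 2) := by
    have : (0:ℝ) < 144 * ‖μ‖ + 48 * ‖μ‖ ^ 2 - 2 := by nlinarith [hr50, hr0]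
    positivity
  nlinarith [e1, e2, f2, f3, hbracket, hr0, hr48, hr50]
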